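/- (Lovász Local Lemma / Dobrushin condition.) Let G = (V,E) be a locally finite simple graph and p ∈ [0,1]^V with q := 1 − p coordinatewise. If there exists a vector s ∈ (0,∞)^V such that for every v ∈ V one has q_v · Π_{w ∈ N⁺(v)} (1 + s_w) ≤ s_v, then Ξ_{G[W]}(p) > 0 for every finite W ⊆ V, i.e. p lies in the interior Shearer set of G. -/

import Mathlib

open MeasureTheory Finset
open scoped Classical

/-- The critical function Ξ_{G[W]}(p). -/
noncomputable def Xi {V : Type*} (G : SimpleGraph V) (W : Finset V) (p : V → ℝ) : ℝ :=
  ∑ T ∈ W.powerset,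
    if ∀ u ∈ T, ∀ w ∈ T, ¬ G.Adj u w then ∏ v ∈ T, -(1 - p v) else 0


lemma Xi_rec {V : Type*} [DecidableEq V] (G : SimpleGraph V)
    (hlf : ∀ v : V, (G.neighborSet v).Finite) (p : V → ℝ) (W : Finset V)
    (v : V) (hv : v ∈ W) :
    Xi G W p = Xi G (W.erase v) p
      + (-(1 - p v)) * Xi G ((W.erase v) \ (hlf v).toFinset) p := by
  classical
  set A := W.erase v with hA
  have hvA : v ∉ A := notMem_erase v W
  have hW : W = insert v A := (insert_erase hv).symm
  rw [hW]
  unfold Xi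
  rw [Finset.sum_powerset_insert hvA]
  congr 1
  have h1 : ∀ T ∈ A.powerset,
      (if ∀ u ∈ insert v T, ∀ w ∈ insert v T, ¬ G.Adj u w then
          ∏ x ∈ insert v T, -(1 - p x) else 0)
      = (if T ⊆ A \ (hlf v).toFinset ∧ (∀ u ∈ T, ∀ w ∈ T, ¬ G.Adj u w)
          then (-(1 - p v)) * ∏ x ∈ T, -(1 - p x) else 0) := by
    intro T hT
    rw [mem_powerset] at hT
    have hvT : v ∉ T := fun h => hvA (hT h)
    have hiff : (∀ u ∈ insert v T, ∀ w ∈ insert v T, ¬ G.Adj u w)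
        ↔ (T ⊆ A \ (hlf v).toFinset ∧ (∀ u ∈ T, ∀ w ∈ T, ¬ G.Adj u w)) := by
      constructor
      · intro h
        refine ⟨fun w hw => ?_, fun u hu w hw =>
          h u (mem_insert_of_mem hu) w (mem_insert_of_mem hw)⟩
        rw [mem_sdiff, Set.Finite.mem_toFinset]
        exact ⟨hT hw, h v (mem_insert_self _ _) w (mem_insert_of_mem hw)⟩
      · rintro ⟨hsub, hind⟩ u hu w hw
        rcases mem_insert.1 hu with rfl | hu' <;> rcases mem_insert.1 hw with rfl | hw'
        · exact G.irrefl
        · have := (mem_sdiff.1 (hsub hw')).2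
          rw [Set.Finite.mem_toFinset] at this
          exact this
        · intro hadj
          have := (mem_sdiff.1 (hsub hu')).2
          rw [Set.Finite.mem_toFinset] at this
          exact this hadj.symm
        · exact hind u hu' w hw'
    rw [Finset.prod_insert hvT]
    exact if_congr hiff rfl rfl
  rw [Finset.sum_congr rfl h1]
  rw [← Finset.sum_subset (Finset.powerset_mono.2 Finset.sdiff_subset)
    (fun T hT hT' => by
      rw [mem_powerset] at hT'
      exact if_neg (fun hc => hT' hc.1))]
  rw [Finset.mul_sum]
  refine Finset.sum_congr rfl (fun T hT => ?_)
  rw [mem_powerset] at hT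
  rw [if_congr (and_iff_right hT) rfl rfl, mul_ite, mul_zero]

lemma Xi_empty {V : Type*} (G : SimpleGraph V) (p : V → ℝ) : Xi G ∅ p = 1 := by
  simp [Xi]


/-- the Lovász Local Lemma / Dobrushin condition implies that
p lies in the interior Shearer set. -/
theorem stmt4 {V : Type*} [DecidableEq V] (G : SimpleGraph V)
    (hlf : ∀ v : V, (G.neighborSet v).Finite)
    (p : V → ℝ) (hp : ∀ v, p v ∈ Set.Icc (0:ℝ) 1)
    (s : V → ℝ) (hs : ∀ v, 0 < s v)
    (hcond : ∀ v : V,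
      (1 - p v) * ∏ w ∈ insert v (hlf v).toFinset, (1 + s w) ≤ s v) :
    ∀ W : Finset V, 0 < Xi G W p := by
  classical
  have key : ∀ W : Finset V,
      0 < Xi G W p ∧ ∀ v ∈ W, Xi G (W.erase v) p ≤ (1 + s v) * Xi G W p := by
    intro W
    induction W using Finset.strongInduction with
    | _ W ih =>
      have main : ∀ v ∈ W, Xi G (W.erase v) p ≤ (1 + s v) * Xi G W p := by
        intro v hv
        set A := W.erase v with hA
        have hAW : A ⊂ W := Finset.erase_ssubset hv
        have hXiA : 0 < Xi G A p := (ih A hAW).1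
        have hmono : ∀ S : Finset V,
            Xi G (A \ S) p ≤ (∏ w ∈ S ∩ A, (1 + s w)) * Xi G A p := by
          intro S
          induction S using Finset.induction_on with
          | empty => simp
          | @insert w S hwS ihS =>
            by_cases hwA : w ∈ A \ S
            · have hsubW : A \ S ⊂ W :=
                Finset.ssubset_of_subset_of_ssubset Finset.sdiff_subset hAW
              have h1 := (ih (A \ S) hsubW).2 w hwA
              have h2 : A \ insert w S = (A \ S).erase w := by
                rw [Finset.sdiff_insert]
              have hw1 : (0:ℝ) ≤ 1 + s w := by linarith [(hs w).le]
              have h3 : (1 + s w) * Xi G (A \ S) p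
                  ≤ (1 + s w) * ((∏ x ∈ S ∩ A, (1 + s x)) * Xi G A p) :=
                mul_le_mul_of_nonneg_left ihS hw1
              have h4 : insert w S ∩ A = insert w (S ∩ A) :=
                Finset.insert_inter_of_mem (Finset.mem_sdiff.1 hwA).1
              have h5 : w ∉ S ∩ A := fun h => hwS (Finset.mem_inter.1 h).1
              rw [h2, h4, Finset.prod_insert h5, mul_assoc]
              exact le_trans h1 h3
            · have h2 : A \ insert w S = A \ S := by
                rw [Finset.sdiff_insert, Finset.erase_eq_of_notMem hwA]
              have h4 : insert w S ∩ A = S ∩ A := by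
                by_cases hw : w ∈ A
                · exact absurd (Finset.mem_sdiff.2 ⟨hw, fun h => hwA (by
                    exact absurd h (fun h' => hwA (Finset.mem_sdiff.2 ⟨hw, fun hS => hwS hS⟩)))⟩)
                    hwA
                · exact Finset.insert_inter_of_notMem hw
              rw [h2, h4]
              exact ihS
        -- the key bound
        set Nf := (hlf v).toFinset with hNf
        have hvNf : v ∉ Nf := by
          rw [hNf, Set.Finite.mem_toFinset, SimpleGraph.mem_neighborSet]
          exact G.irrefl
        have hone : ∀ i : V, (1:ℝ) ≤ 1 + s i := fun i => by linarith [(hs i).le]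
        have hPsub : (∏ w ∈ Nf ∩ A, (1 + s w)) ≤ ∏ w ∈ Nf, (1 + s w) := by
          have hsplit := Finset.prod_inter_mul_prod_diff Nf A (fun w => (1 + s w))
          have hnn : (0:ℝ) ≤ ∏ w ∈ Nf ∩ A, (1 + s w) :=
            Finset.prod_nonneg (fun i _ => by linarith [hone i])
          have hge : (1:ℝ) ≤ ∏ w ∈ Nf \ A, (1 + s w) := by
            calc (1:ℝ) = ∏ _w ∈ Nf \ A, (1:ℝ) := (Finset.prod_const_one).symm
            _ ≤ ∏ w ∈ Nf \ A, (1 + s w) :=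
              Finset.prod_le_prod (fun i _ => zero_le_one) (fun i _ => hone i)
          nlinarith
        have hB : Xi G (A \ Nf) p ≤ (∏ w ∈ Nf, (1 + s w)) * Xi G A p :=
          le_trans (hmono Nf) (mul_le_mul_of_nonneg_right hPsub hXiA.le)
        have hq0 : (0:ℝ) ≤ 1 - p v := by linarith [(hp v).2]
        have hcv : (1 - p v) * ((1 + s v) * ∏ w ∈ Nf, (1 + s w)) ≤ s v := by
          have := hcond v
          rwa [Finset.prod_insert hvNf] at this
        have hrec := Xi_rec G hlf p W v hv
        rw [← hA, ← hNf] at hrec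
        have hB' : (1 - p v) * Xi G (A \ Nf) p
            ≤ (1 - p v) * ((∏ w ∈ Nf, (1 + s w)) * Xi G A p) :=
          mul_le_mul_of_nonneg_left hB hq0
        have h1s : (0:ℝ) < 1 + s v := by linarith [hs v]
        nlinarith [mul_le_mul_of_nonneg_left hB' h1s.le,
          mul_le_mul_of_nonneg_right hcv hXiA.le, hXiA, hs v]
      refine ⟨?_, main⟩
      rcases W.eq_empty_or_nonempty with rfl | ⟨v, hv⟩
      · rw [Xi_empty]; norm_num
      · have h1 := main v hv
        have hXiA : 0 < Xi G (W.erase v) p := (ih _ (Finset.erase_ssubset hv)).1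
        nlinarith [hs v]
  exact fun W => (key W).1
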